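/- If L_1 is the privacy loss random variable of (P_1, Q_1) and L_2 is the privacy loss random variable of (P_2, Q_2), with independence, then L_1 + L_2 (i.e., the convolution of their distributions) is the privacy loss random variable of the product distributions (P_1 × P_2, Q_1 × Q_2). -/

import Mathlib

open MeasureTheory Real

theorem privacy_loss_of_product {X₁ X₂ : Type*} [MeasurableSpace X₁] [MeasurableSpace X₂]
    (P₁ Q₁ : Measure X₁) (P₂ Q₂ : Measure X₂)
    [IsProbabilityMeasure P₁] [IsProbabilityMeasure P₂]
    (p₁ q₁ : X₁ → ℝ) (p₂ q₂ : X₂ → ℝ)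
    (hp₁ : ∀ x, 0 < p₁ x) (hq₁ : ∀ x, 0 < q₁ x) (hp₂ : ∀ x, 0 < p₂ x) (hq₂ : ∀ x, 0 < q₂ x)
    (hP₁ : P₁ = Q₁.withDensity fun x => ENNReal.ofReal (p₁ x / q₁ x))
    (hP₂ : P₂ = Q₂.withDensity fun x => ENNReal.ofReal (p₂ x / q₂ x))
    (L₁ : X₁ → ℝ) (L₂ : X₂ → ℝ)
    (hL₁ : L₁ = fun x => log (p₁ x / q₁ x)) (hL₂ : L₂ = fun x => log (p₂ x / q₂ x))
    (hmL₁ : Measurable L₁) (hmL₂ : Measurable L₂) :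
    -- the privacy loss of the product pair is `(x, y) ↦ L₁ x + L₂ y`, and its
    -- distribution under `P₁ × P₂` is the convolution of the laws of `L₁` and `L₂`
    ((fun z : X₁ × X₂ => log ((p₁ z.1 * p₂ z.2) / (q₁ z.1 * q₂ z.2)))
        = fun z : X₁ × X₂ => L₁ z.1 + L₂ z.2) ∧
      Measure.map (fun z : X₁ × X₂ => L₁ z.1 + L₂ z.2) (P₁.prod P₂)
        = Measure.map (fun p : ℝ × ℝ => p.1 + p.2)
            ((P₁.map L₁).prod (P₂.map L₂)) := by
  constructor
  · funext z
    rw [hL₁, hL₂]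
    simp only []
    rw [← div_mul_div_comm, log_mul (div_ne_zero (hp₁ z.1).ne' (hq₁ z.1).ne')
      (div_ne_zero (hp₂ z.2).ne' (hq₂ z.2).ne')]
  · rw [Measure.map_prod_map _ _ hmL₁ hmL₂,
      Measure.map_map (g := fun p : ℝ × ℝ => p.1 + p.2) (measurable_fst.add measurable_snd) (hmL₁.prodMap hmL₂)]
    rfl
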